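/- Let m ≥ 2, n = 2^{m+1} - 4, and let s' be an integer with (n+3)/3 ≤ s' ≤ (n+3)/2, with binary digits ε_m(s') = (s_{m-1},...,s_1,s_0). Then C(s', 3s' - (n+3)) is odd if and only if s_0 = 1 and for every index j with 1 ≤ j ≤ m-2, s_j = 0 implies s_{j+1} = 1. -/

import Mathlib

/-- Kummer/Lucas for p = 2: `choose n k` is odd iff `k` is a bitwise submask of `n`. -/
lemma choose_mod_two_eq_one_iff' (n : ℕ) :
    ∀ k : ℕ, Nat.choose n k % 2 = 1 ↔ ∀ i, k.testBit i = true → n.testBit i = true := by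
  induction n using Nat.strong_induction_on with
  | _ n ih =>
  intro k
  rcases Nat.eq_zero_or_pos n with rfl | hn
  · constructor
    · intro h i hk
      have hk0 : k = 0 := by
        by_contra hk0
        have := Nat.choose_eq_zero_of_lt (Nat.pos_of_ne_zero hk0)
        omega
      subst hk0
      simp [Nat.zero_testBit] at hk
    · intro h
      have hk : k = 0 := by
        apply Nat.eq_of_testBit_eq
        intro i
        simp only [Nat.zero_testBit]
        cases hb : k.testBit i
        · rfl
        · have := h i hb; simpa [Nat.zero_testBit] using this
      subst hk; simp
  · have key : Nat.choose n k % 2 =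
        (Nat.choose (n % 2) (k % 2) * Nat.choose (n / 2) (k / 2)) % 2 :=
      Choose.choose_modEq_choose_mod_mul_choose_div_nat (p := 2)
    have hrec := ih (n / 2) (Nat.div_lt_self hn one_lt_two) (k / 2)
    have hsplit : (∀ i, k.testBit i = true → n.testBit i = true) ↔
        ((k.testBit 0 = true → n.testBit 0 = true) ∧
          ∀ i, (k / 2).testBit i = true → (n / 2).testBit i = true) := by
      constructor
      · intro h
        refine ⟨h 0, fun i hi => ?_⟩
        rw [Nat.testBit_div_two] at hi ⊢
        exact h (i + 1) hi
      · rintro ⟨h0, h⟩ i hi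
        cases i with
        | zero => exact h0 hi
        | succ i =>
          have := h i
          rw [Nat.testBit_div_two, Nat.testBit_div_two] at this
          exact this hi
    rw [key, Nat.mul_mod, hsplit, ← hrec]
    have hb : Nat.choose (n / 2) (k / 2) % 2 = 0 ∨ Nat.choose (n / 2) (k / 2) % 2 = 1 :=
      Nat.mod_two_eq_zero_or_one _
    have hn2 := Nat.mod_two_eq_zero_or_one n
    have hk2 := Nat.mod_two_eq_zero_or_one k
    rcases hn2 with h1 | h1 <;> rcases hk2 with h2 | h2 <;>
      simp [Nat.testBit_zero, h1, h2] <;> omega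

theorem g_n_plus_three_coeff (m : ℕ) (hm : 2 ≤ m) (n : ℕ) (hn : n = 2 ^ (m + 1) - 4)
    (s' : ℕ) (hs1 : n + 3 ≤ 3 * s') (hs2 : 2 * s' ≤ n + 3) :
    Nat.choose s' (3 * s' - (n + 3)) % 2 = 1 ↔
      s'.testBit 0 = true ∧
        ∀ j, 1 ≤ j → j ≤ m - 2 → s'.testBit j = false → s'.testBit (j + 1) = true := by
  have hpow : (8 : ℕ) ≤ 2 ^ (m + 1) := by
    calc (8 : ℕ) = 2 ^ 3 := by norm_num
    _ ≤ 2 ^ (m + 1) := Nat.pow_le_pow_right (by norm_num) (by omega)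
  have hm1 : 2 ^ (m + 1) = 2 * 2 ^ m := by ring
  have hm2 : 2 ^ (m + 1) = 4 * 2 ^ (m - 1) := by
    have : m + 1 = (m - 1) + 2 := by omega
    rw [this, pow_add]; ring
  have hm3 : 2 ^ m = 2 * 2 ^ (m - 1) := by
    rw [← pow_succ']; congr 1; omega
  have hk_le : 3 * s' - (n + 3) ≤ s' := by omega
  rw [← Nat.choose_symm hk_le]
  have ht : s' - (3 * s' - (n + 3)) = 2 ^ (m + 1) - (2 * s' + 1) := by omega
  rw [ht, choose_mod_two_eq_one_iff']
  have h2s : 2 * s' < 2 ^ (m + 1) := by omega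
  have hbit : ∀ i, (2 ^ (m + 1) - (2 * s' + 1)).testBit i
      = (decide (i < m + 1) && !(2 * s').testBit i) := fun i =>
    Nat.testBit_two_pow_sub_succ h2s i
  have h2s0 : (2 * s').testBit 0 = false := by
    simp [Nat.testBit_zero, Nat.mul_mod_right]
  have h2ss : ∀ j, (2 * s').testBit (j + 1) = s'.testBit j := by
    intro j
    rw [Nat.testBit_add_one, Nat.mul_div_cancel_left _ (by norm_num)]
  have hsm : s' < 2 ^ m := by omega
  constructor
  · intro h
    refine ⟨?_, ?_⟩
    · apply h 0
      rw [hbit 0, h2s0]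
      simp
    · intro j hj1 hj2 hsj
      apply h (j + 1)
      rw [hbit (j + 1), h2ss j, hsj]
      simp
      omega
  · rintro ⟨h0, h⟩ i
    rw [hbit i]
    cases i with
    | zero => intro _; exact h0
    | succ j =>
      intro hi
      rw [h2ss j] at hi
      simp only [Bool.and_eq_true, Bool.not_eq_true', decide_eq_true_eq] at hi
      obtain ⟨hjm, hsj⟩ := hi
      -- j < m, s'.testBit j = false; show s'.testBit (j+1) = true
      rcases Nat.eq_zero_or_pos j with rfl | hj0
      · exact absurd hsj (by rw [h0]; simp)
      rcases lt_or_ge j (m - 1) with hjlt | hjge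
      · exact h j hj0 (by omega) hsj
      · -- j = m - 1 : contradiction with hs1
        exfalso
        have hjm1 : j = m - 1 := by omega
        subst hjm1
        -- s' / 2^(m-1) = 0 or 1, and its parity is 0
        have hdiv : s' / 2 ^ (m - 1) < 2 := by
          rw [Nat.div_lt_iff_lt_mul (Nat.pos_of_ne_zero (by positivity))]
          omega
        have hpar : s' / 2 ^ (m - 1) % 2 = 0 := by
          have := hsj
          rw [Nat.testBit_eq_decide_div_mod_eq] at this
          simpa using this
        have hdiv0 : s' / 2 ^ (m - 1) = 0 := by
          generalize s' / 2 ^ (m - 1) = x at hdiv hpar ⊢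
          omega
        have hlt : s' < 2 ^ (m - 1) := by
          rwa [Nat.div_eq_zero_iff_lt (Nat.pos_of_ne_zero (by positivity))] at hdiv0
        omega
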